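/- Under a rigging transformation with background gauge fields (λ ≠ 0, v ∈ V) and first-order gauge fields (δλ, δv) (with δv = δW·n + P(δZ,·)♯, n2·δW + δZ(n) = 0), the transformed perturbation of n2 satisfies δn2' = −2(δλ/λ³)·n2 + δn2/λ² = −2(δλ/λ)·n2' + δn2/λ², where n2' = n2/λ². Consequently, at a null point (n2 = 0), δn2' = δn2/λ², so the sign of δn2 at null points is invariant under all rigging transformations. -/

import Mathlib

/-- Transformation of the first-order perturbation of n2 under rigging transformations
(Lemma 5.4 and its Corollary): differentiating n2' = n2/λ² in the perturbation parameter
gives δn2' = −2(δλ/λ³)n2 + δn2/λ² = −2(δλ/λ)n2' + δn2/λ²; at a null point (n2 = 0) this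
reduces to δn2' = δn2/λ², so the sign of δn2 is invariant under rigging transformations. -/
theorem stmt_13
    (n2fam lamfam : ℝ → ℝ)
    (hn2 : DifferentiableAt ℝ n2fam 0)
    (hlamdiff : DifferentiableAt ℝ lamfam 0)
    (hl0 : lamfam 0 ≠ 0) :
    let lam0 : ℝ := lamfam 0
    let dlam : ℝ := deriv lamfam 0
    let dn2 : ℝ := deriv n2fam 0
    let dn2' : ℝ := deriv (fun ε => n2fam ε / (lamfam ε) ^ 2) 0
    (dn2' = -2 * (dlam / lam0 ^ 3) * n2fam 0 + dn2 / lam0 ^ 2) ∧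
    (dn2' = -2 * (dlam / lam0) * (n2fam 0 / lam0 ^ 2) + dn2 / lam0 ^ 2) ∧
    (n2fam 0 = 0 →
      dn2' = dn2 / lam0 ^ 2 ∧
      (0 < dn2' ↔ 0 < dn2) ∧ (dn2' < 0 ↔ dn2 < 0) ∧ (dn2' = 0 ↔ dn2 = 0)) := by
  intro lam0 dlam dn2 dn2'
  have hsq : (lamfam 0) ^ 2 ≠ 0 := pow_ne_zero 2 hl0
  have hdsq : DifferentiableAt ℝ (fun ε => (lamfam ε) ^ 2) 0 := hlamdiff.pow 2
  have hderiv : dn2' = (dn2 * (lamfam 0) ^ 2 - n2fam 0 * (2 * lamfam 0 * dlam)) /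
      ((lamfam 0) ^ 2) ^ 2 := by
    show deriv (fun ε => n2fam ε / (lamfam ε) ^ 2) 0 = _
    rw [deriv_fun_div hn2 hdsq hsq]
    congr 1
    congr 1
    rw [show (fun ε => lamfam ε ^ 2) = lamfam ^ 2 from rfl, deriv_pow hlamdiff, Nat.cast_ofNat, show 2 - 1 = 1 from rfl]
    ring
  have key : dn2' = -2 * (dlam / lam0 ^ 3) * n2fam 0 + dn2 / lam0 ^ 2 := by
    rw [hderiv]; show _ = -2 * (dlam / (lamfam 0) ^ 3) * n2fam 0 + dn2 / (lamfam 0) ^ 2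
    field_simp
    ring
  refine ⟨key, ?_, ?_⟩
  · rw [key]; show -2 * (dlam / (lamfam 0) ^ 3) * n2fam 0 + dn2 / (lamfam 0) ^ 2 = -2 * (dlam / lamfam 0) * (n2fam 0 / (lamfam 0) ^ 2) + dn2 / (lamfam 0) ^ 2
    field_simp
  · intro h0
    have h : dn2' = dn2 / lam0 ^ 2 := by rw [key, h0]; ring
    have hpos : (0:ℝ) < lam0 ^ 2 := by positivity
    refine ⟨h, ?_, ?_, ?_⟩
    · rw [h]; exact div_pos_iff_of_pos_right hpos
    · rw [h, div_neg_iff]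
      constructor
      · rintro (⟨_, h2⟩ | ⟨h1, _⟩)
        · linarith
        · exact h1
      · intro hx; exact Or.inr ⟨hx, hpos⟩
    · rw [h, div_eq_zero_iff]; simp [hsq, show lam0 ≠ 0 from hl0]
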